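/- Under FiberPool with honest allocation, the total reward over N periods for a miner with hashrate fraction α who allocates xᵢ = Pα in every period equals N·R·α, matching the reward of honest mining; any unequal allocation with the same total PoW yields strictly less. -/

import Mathlib

open Finset

lemma fiber_strictConcave (R c : ℝ) (hR : 0 < R) (hc : 0 < c) :
    StrictConcaveOn ℝ (Set.Ici (0:ℝ)) (fun x => R * x / (c + x)) := by
  have hderiv : ∀ x ∈ Set.Ioi (-c), HasDerivAt (fun x => R * x / (c + x))
      (R * c / (c + x) ^ 2) x := by
    intro x hx
    have hx' : c + x ≠ 0 := by
      have : -c < x := hx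
      nlinarith
    have h1 : HasDerivAt (fun x : ℝ => R * x) R x := by
      simpa using (hasDerivAt_id x).const_mul R
    have h2 : HasDerivAt (fun x : ℝ => c + x) 1 x := by
      simpa using (hasDerivAt_id x).const_add c
    have := h1.fun_div h2 hx'
    refine this.congr_deriv ?_
    field_simp
    ring
  have hderiv2 : ∀ x ∈ Set.Ioi (-c), HasDerivAt (fun x => R * c / (c + x) ^ 2)
      (-(2 * R * c) / (c + x) ^ 3) x := by
    intro x hx
    have hx' : c + x ≠ 0 := by
      have : -c < x := hx
      nlinarith
    have h2 : HasDerivAt (fun x : ℝ => (c + x) ^ 2) (2 * (c + x)) x := by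
      have := ((hasDerivAt_id x).const_add c).fun_pow 2
      simpa using this
    have := (hasDerivAt_const x (R * c)).fun_div h2 (pow_ne_zero 2 hx')
    refine this.congr_deriv ?_
    field_simp
    ring
  apply strictConcaveOn_of_deriv2_neg (convex_Ici 0)
  · apply ContinuousOn.div
    · fun_prop
    · fun_prop
    · intro x hx
      have : (0:ℝ) ≤ x := hx
      positivity
  · intro x hx
    rw [interior_Ici] at hx
    have hx0 : (0:ℝ) < x := hx
    have hxc : x ∈ Set.Ioi (-c) := by simp [Set.mem_Ioi]; linarith
    have hEq : deriv (fun x => R * x / (c + x)) =ᶠ[nhds x]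
        (fun x => R * c / (c + x) ^ 2) := by
      filter_upwards [Ioi_mem_nhds (show -c < x by linarith)] with y hy
      exact (hderiv y hy).deriv
    have : deriv^[2] (fun x => R * x / (c + x)) x
        = -(2 * R * c) / (c + x) ^ 3 := by
      rw [Function.iterate_succ, Function.iterate_one, Function.comp_apply]
      rw [Filter.EventuallyEq.deriv_eq hEq]
      exact (hderiv2 x hxc).deriv
    rw [this]
    have : (0:ℝ) < (c + x) ^ 3 := by positivity
    have h2 : (0:ℝ) < 2 * R * c := by positivity
    exact div_neg_of_neg_of_pos (by linarith) this

/-- Under FiberPool, with per-period reward `R·x/(P(1-α)+x)` for allocating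
`x` PoW, a miner with hashrate fraction `α` who allocates `xᵢ = Pα` in every
period earns total reward `N·R·α` over `N` periods (matching honest mining),
and any unequal allocation with the same total PoW `N·P·α` yields strictly
less. -/
theorem fiberpool_honest_allocation_optimal
    (R P α : ℝ) (hR : 0 < R) (hP : 0 < P) (hα0 : 0 < α) (hα1 : α < 1)
    (N : ℕ) (hN : 1 ≤ N) :
    (∑ _i : Fin N, R * (P * α) / (P * (1 - α) + P * α)) = N * R * α ∧
      ∀ x : Fin N → ℝ, (∀ i, 0 ≤ x i) → (∑ i, x i) = N * P * α →
        (¬ ∀ i, x i = P * α) →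
        (∑ i, R * x i / (P * (1 - α) + x i)) < N * R * α := by
  have hterm : R * (P * α) / (P * (1 - α) + P * α) = R * α := by
    have : P * (1 - α) + P * α = P := by ring
    rw [this]
    field_simp
  constructor
  · rw [Finset.sum_const, hterm, Finset.card_univ, Fintype.card_fin]
    push_cast
    ring
  · intro x hx hsum hne
    set c := P * (1 - α) with hc_def
    have hc : 0 < c := by
      have : 0 < 1 - α := by linarith
      positivity
    have hN0 : (0:ℝ) < N := by exact_mod_cast Nat.lt_of_lt_of_le Nat.zero_lt_one hN
    have hconc := fiber_strictConcave R c hR hc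
    -- find two distinct values
    push_neg at hne
    obtain ⟨j, hj⟩ := hne
    have hp : ∃ a ∈ Finset.univ, ∃ b ∈ (Finset.univ : Finset (Fin N)), x a ≠ x b := by
      by_contra h
      push_neg at h
      have hall : ∀ i : Fin N, x i = x j := fun i => h i (mem_univ i) j (mem_univ j)
      have : (∑ i, x i) = N * x j := by
        rw [Finset.sum_congr rfl (fun i _ => hall i), Finset.sum_const,
          Finset.card_univ, Fintype.card_fin, nsmul_eq_mul]
      rw [this] at hsum
      apply hj
      have hN0' : (0:ℝ) < N := by exact_mod_cast Nat.lt_of_lt_of_le Nat.zero_lt_one hN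
      have : (N:ℝ) * x j = (N:ℝ) * (P * α) := by linarith
      exact mul_left_cancel₀ hN0'.ne' this
    have hw : (∑ _i : Fin N, (N:ℝ)⁻¹) = 1 := by
      rw [Finset.sum_const, Finset.card_univ, Fintype.card_fin, nsmul_eq_mul]
      field_simp
    have hjensen := hconc.lt_map_sum (w := fun _ => (N:ℝ)⁻¹) (p := x)
      (fun i _ => by positivity) hw (fun i _ => hx i) hp
    simp only [smul_eq_mul] at hjensen
    have hmean : (∑ i, (N:ℝ)⁻¹ * x i) = P * α := by
      rw [← Finset.mul_sum, hsum]
      field_simp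
    rw [hmean] at hjensen
    have hfmean : R * (P * α) / (c + P * α) = R * α := by
      rw [hc_def]; exact hterm
    rw [hfmean] at hjensen
    have : (∑ i, (N:ℝ)⁻¹ * (R * x i / (c + x i)))
        = (N:ℝ)⁻¹ * ∑ i, R * x i / (c + x i) := by
      rw [Finset.mul_sum]
    rw [this] at hjensen
    calc (∑ i, R * x i / (P * (1 - α) + x i))
        = N * ((N:ℝ)⁻¹ * ∑ i, R * x i / (c + x i)) := by
          rw [hc_def]; field_simp
      _ < N * (R * α) := by
          exact mul_lt_mul_of_pos_left hjensen hN0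
      _ = N * R * α := by ring
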